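/- arXiv:2603.11173 — 7 statements merged into one kernel-verified Lean document; each statement's English description precedes it below -/
import Mathlib

section
/- Let ι be a finite nonempty index set and let x, y : ι → ℤ. Define g : ℝ → ℝ by g(t) = minᵢ∈ι ((1−t)·xᵢ + t·yᵢ). Suppose g(0) < 0 and g(1) > 0. Then there exists a unique s ∈ (0,1) with g(s) = 0, and this s is a rational number. -/
/-- For a minimum `g(t) = minᵢ ((1−t)·xᵢ + t·yᵢ)` of finitely many affine
functions with integer values at `t = 0` and `t = 1`, if `g(0) < 0` and `g(1) > 0` then
`g` has a unique zero `s` in `(0,1)`, and this zero is rational. -/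
theorem min_affine_unique_rational_zero
    {ι : Type*} [Fintype ι] [Nonempty ι] (x y : ι → ℤ) (g : ℝ → ℝ)
    (hg : ∀ t : ℝ, g t =
      Finset.univ.inf' Finset.univ_nonempty (fun i => (1 - t) * (x i : ℝ) + t * (y i : ℝ)))
    (h0 : g 0 < 0) (h1 : 0 < g 1) :
    (∃! s : ℝ, s ∈ Set.Ioo (0 : ℝ) 1 ∧ g s = 0) ∧
    (∀ s : ℝ, s ∈ Set.Ioo (0 : ℝ) 1 → g s = 0 → ∃ q : ℚ, (q : ℝ) = s) := by
  have hcont : Continuous g := by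
    have : Continuous fun t : ℝ =>
        Finset.univ.inf' Finset.univ_nonempty (fun i => (1 - t) * (x i : ℝ) + t * (y i : ℝ)) := by
      apply Continuous.finset_inf'_apply
      intro i _
      fun_prop
    have heq : g = fun t : ℝ =>
        Finset.univ.inf' Finset.univ_nonempty (fun i => (1 - t) * (x i : ℝ) + t * (y i : ℝ)) :=
      funext hg
    rw [heq]; exact this
  -- uniqueness helper: at most one zero in (0,1)
  have huniq : ∀ s₁ s₂ : ℝ, s₁ ∈ Set.Ioo (0:ℝ) 1 → g s₁ = 0 →
      s₂ ∈ Set.Ioo (0:ℝ) 1 → g s₂ = 0 → s₁ = s₂ := by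
    have key : ∀ s₁ s₂ : ℝ, s₁ ∈ Set.Ioo (0:ℝ) 1 → g s₁ = 0 →
        s₂ ∈ Set.Ioo (0:ℝ) 1 → g s₂ = 0 → ¬ s₁ < s₂ := by
      intro s₁ s₂ hs₁ hz₁ hs₂ hz₂ hlt
      obtain ⟨i, _, hi⟩ := Finset.exists_mem_eq_inf' (Finset.univ_nonempty)
        (fun j => (1 - s₂) * (x j : ℝ) + s₂ * (y j : ℝ))
      have hfi : (1 - s₂) * (x i : ℝ) + s₂ * (y i : ℝ) = 0 := by
        rw [← hi, ← hg s₂, hz₂]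
      have hfi1 : g s₁ ≤ (1 - s₁) * (x i : ℝ) + s₁ * (y i : ℝ) := by
        rw [hg s₁]; exact Finset.inf'_le _ (Finset.mem_univ i)
      have hb : g 1 ≤ (y i : ℝ) := by
        rw [hg 1]
        have := Finset.inf'_le (fun j => (1 - (1:ℝ)) * (x j : ℝ) + 1 * (y j : ℝ))
          (Finset.mem_univ i)
        simp only [sub_self, zero_mul, zero_add, one_mul] at this ⊢; exact this
      rw [hz₁] at hfi1
      have hy : (0:ℝ) < (y i : ℝ) := lt_of_lt_of_le h1 hb
      obtain ⟨hs₁0, hs₁1⟩ := hs₁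
      obtain ⟨hs₂0, hs₂1⟩ := hs₂
      nlinarith [mul_pos (sub_pos.2 hlt) hy, mul_nonneg (sub_nonneg.2 hs₂1.le) hfi1]
    intro s₁ s₂ h1' h2' h3' h4'
    rcases lt_trichotomy s₁ s₂ with h | h | h
    · exact absurd h (key s₁ s₂ h1' h2' h3' h4')
    · exact h
    · exact absurd h (key s₂ s₁ h3' h4' h1' h2')
  -- existence
  have hmem : (0:ℝ) ∈ Set.Ioo (g 0) (g 1) := ⟨h0, h1⟩
  have hivt := intermediate_value_Ioo (zero_le_one) hcont.continuousOn
  obtain ⟨s, hs, hgs⟩ := hivt hmem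
  refine ⟨⟨s, ⟨hs, hgs⟩, fun t ht => huniq t s ht.1 ht.2 hs hgs⟩, ?_⟩
  intro s' hs' hgs'
  obtain ⟨i, _, hi⟩ := Finset.exists_mem_eq_inf' (Finset.univ_nonempty)
    (fun j => (1 - s') * (x j : ℝ) + s' * (y j : ℝ))
  have hfi : (1 - s') * (x i : ℝ) + s' * (y i : ℝ) = 0 := by
    rw [← hi, ← hg s', hgs']
  have hne : (x i : ℝ) ≠ (y i : ℝ) := by
    intro h
    rw [← h] at hfi
    have hx0 : (x i : ℝ) = 0 := by linear_combination hfi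
    have hb : g 1 ≤ (y i : ℝ) := by
      rw [hg 1]
      have := Finset.inf'_le (fun j => (1 - (1:ℝ)) * (x j : ℝ) + 1 * (y j : ℝ))
        (Finset.mem_univ i)
      simp only [sub_self, zero_mul, zero_add, one_mul] at this ⊢; exact this
    rw [← h, hx0] at hb
    linarith
  have hxy : (x i : ℝ) - (y i : ℝ) ≠ 0 := sub_ne_zero.2 hne
  refine ⟨(x i : ℚ) / ((x i : ℚ) - (y i : ℚ)), ?_⟩
  have hxyq : ((x i : ℚ) - (y i : ℚ)) ≠ 0 := by
    intro h
    apply hxy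
    have : ((x i : ℚ) : ℝ) - ((y i : ℚ) : ℝ) = 0 := by exact_mod_cast congrArg (fun q : ℚ => (q : ℝ)) h
    push_cast at this ⊢; linarith
  push_cast
  field_simp
  linarith [hfi]
end

section
/- For natural numbers p and m, the vector (−p, p, m) ∈ ℤ³ is a non-negative integer combination of the vectors (1,0,0), (0,1,0), (1,1,0), (−2,2,1), (0,0,1) if and only if p is even and 2m ≥ p. -/
/-- for natural numbers `p, m`, the vector `(−p, p, m) ∈ ℤ³` is a
non-negative integer combination of `(1,0,0), (0,1,0), (1,1,0), (−2,2,1), (0,0,1)`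
iff `p` is even and `2m ≥ p`. -/
theorem boundary_holes_h11_3
    (p m : ℕ) :
    (∃ a b c d e : ℕ,
      ((-(p : ℤ)), (p : ℤ), (m : ℤ)) =
        a • ((1 : ℤ), (0 : ℤ), (0 : ℤ)) + b • ((0 : ℤ), (1 : ℤ), (0 : ℤ)) +
        c • ((1 : ℤ), (1 : ℤ), (0 : ℤ)) + d • ((-2 : ℤ), (2 : ℤ), (1 : ℤ)) +
        e • ((0 : ℤ), (0 : ℤ), (1 : ℤ))) ↔
      (Even p ∧ p ≤ 2 * m) := by
  constructor
  · rintro ⟨a, b, c, d, e, h⟩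
    simp only [Prod.ext_iff, Prod.smul_mk, Prod.mk_add_mk, nsmul_eq_mul] at h
    obtain ⟨h1, h2, h3⟩ := h
    exact ⟨⟨d, by omega⟩, by omega⟩
  · rintro ⟨⟨k, hk⟩, hle⟩
    refine ⟨0, 0, 0, k, m - k, ?_⟩
    simp only [Prod.ext_iff, Prod.smul_mk, Prod.mk_add_mk, nsmul_eq_mul]
    refine ⟨by omega, by omega, by omega⟩
end

section
/- A vector (x, y, z) ∈ ℤ³ is a non-negative integer combination of the five vectors (1,0,0), (0,1,0), (0,0,1), (−2,2,1), (−1,1,1) if and only if y ≥ 0, z ≥ 0, x + y ≥ 0, and x + 2z ≥ 0. Moreover, the vector (−1,1,1) is not a non-negative integer combination of the four vectors (1,0,0), (0,1,0), (0,0,1), (−2,2,1). -/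
/-- `(x,y,z) ∈ ℤ³` is a non-negative integer combination of
`(1,0,0), (0,1,0), (0,0,1), (−2,2,1), (−1,1,1)` iff `y ≥ 0`, `z ≥ 0`, `x + y ≥ 0` and
`x + 2z ≥ 0`; moreover `(−1,1,1)` is not a non-negative integer combination of the four
extremal ray generators `(1,0,0), (0,1,0), (0,0,1), (−2,2,1)`. -/
theorem hilbert_basis_V351 :
    (∀ x y z : ℤ,
      (∃ a b c d e : ℕ,
        (x, y, z) =
          a • ((1 : ℤ), (0 : ℤ), (0 : ℤ)) + b • ((0 : ℤ), (1 : ℤ), (0 : ℤ)) +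
          c • ((0 : ℤ), (0 : ℤ), (1 : ℤ)) + d • ((-2 : ℤ), (2 : ℤ), (1 : ℤ)) +
          e • ((-1 : ℤ), (1 : ℤ), (1 : ℤ))) ↔
        (0 ≤ y ∧ 0 ≤ z ∧ 0 ≤ x + y ∧ 0 ≤ x + 2 * z)) ∧
    ¬ ∃ a b c d : ℕ,
      ((-1 : ℤ), (1 : ℤ), (1 : ℤ)) =
        a • ((1 : ℤ), (0 : ℤ), (0 : ℤ)) + b • ((0 : ℤ), (1 : ℤ), (0 : ℤ)) +
        c • ((0 : ℤ), (0 : ℤ), (1 : ℤ)) + d • ((-2 : ℤ), (2 : ℤ), (1 : ℤ)) := by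
  constructor
  · intro x y z
    constructor
    · rintro ⟨a, b, c, d, e, h⟩
      simp only [Prod.smul_mk, Prod.mk_add_mk, Prod.mk.injEq, nsmul_eq_mul] at h
      obtain ⟨h1, h2, h3⟩ := h
      push_cast at h1 h2 h3
      omega
    · rintro ⟨hy, hz, hxy, hxz⟩
      rcases le_or_gt 0 x with hx | hx
      · refine ⟨x.toNat, y.toNat, z.toNat, 0, 0, ?_⟩
        simp only [Prod.smul_mk, Prod.mk_add_mk, Prod.mk.injEq, nsmul_eq_mul]
        push_cast
        omega
      · refine ⟨0, (y + x).toNat, (z - (-x) / 2 - (-x) % 2).toNat, ((-x) / 2).toNat,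
          ((-x) % 2).toNat, ?_⟩
        simp only [Prod.smul_mk, Prod.mk_add_mk, Prod.mk.injEq, nsmul_eq_mul]
        push_cast
        refine ⟨?_, ?_, ?_⟩ <;> omega
  · rintro ⟨a, b, c, d, h⟩
    simp only [Prod.smul_mk, Prod.mk_add_mk, Prod.mk.injEq, nsmul_eq_mul] at h
    obtain ⟨h1, h2, h3⟩ := h
    push_cast at h1 h2 h3
    omega
end

section
/- A vector (x, y, z) ∈ ℤ³ is a non-negative integer combination of the four vectors (1,0,0), (0,1,0), (0,0,1), (3,−1,1) if and only if x ≥ 0, z ≥ 0, y + z ≥ 0, and x + 3y ≥ 0. -/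
/-- `(x,y,z) ∈ ℤ³` is a non-negative integer combination of
`(1,0,0), (0,1,0), (0,0,1), (3,−1,1)` iff `x ≥ 0`, `z ≥ 0`, `y + z ≥ 0` and
`x + 3y ≥ 0`. -/
theorem hilbert_basis_V3165
    (x y z : ℤ) :
    (∃ a b c d : ℕ,
      (x, y, z) =
        a • ((1 : ℤ), (0 : ℤ), (0 : ℤ)) + b • ((0 : ℤ), (1 : ℤ), (0 : ℤ)) +
        c • ((0 : ℤ), (0 : ℤ), (1 : ℤ)) + d • ((3 : ℤ), (-1 : ℤ), (1 : ℤ))) ↔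
      (0 ≤ x ∧ 0 ≤ z ∧ 0 ≤ y + z ∧ 0 ≤ x + 3 * y) := by
  constructor
  · rintro ⟨a, b, c, d, h⟩
    simp only [Prod.ext_iff, Prod.smul_mk, Prod.mk_add_mk, nsmul_eq_mul] at h
    omega
  · rintro ⟨hx, hz, hyz, hxy⟩
    rcases le_or_gt 0 y with hy | hy
    · refine ⟨x.toNat, y.toNat, z.toNat, 0, ?_⟩
      simp only [Prod.ext_iff, Prod.smul_mk, Prod.mk_add_mk, nsmul_eq_mul]
      push_cast
      omega
    · refine ⟨(x + 3 * y).toNat, 0, (z + y).toNat, (-y).toNat, ?_⟩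
      simp only [Prod.ext_iff, Prod.smul_mk, Prod.mk_add_mk, nsmul_eq_mul]
      push_cast
      omega
end

section
/- For natural numbers n, m, l, the vector (3 + n + 6m, −1 − 2m, 1 + 2m + l) ∈ ℤ³ is a non-negative integer combination of the vectors (1,0,0), (3,1,1), (0,1,0), (6,−2,2), (0,0,1) if and only if n ≥ 3 and l ≥ 1. In particular, whenever l = 0, or n ∈ {0, 1, 2}, this vector is not a non-negative integer combination of the listed vectors. -/
/-- for natural numbers `n, m, l`, the class
`(3 + n + 6m, −1 − 2m, 1 + 2m + l)` is a non-negative integer combination of the prime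
toric divisor classes `(1,0,0), (3,1,1), (0,1,0), (6,−2,2), (0,0,1)` of `V_{3,165}` iff
`n ≥ 3` and `l ≥ 1`; in particular, when `l = 0` or `n ∈ {0,1,2}` it is not such a
combination. -/
theorem holes_V3165
    (n m l : ℕ) :
    ((∃ a b c d e : ℕ,
      ((3 + n + 6 * m : ℤ), (-1 - 2 * m : ℤ), (1 + 2 * m + l : ℤ)) =
        a • ((1 : ℤ), (0 : ℤ), (0 : ℤ)) + b • ((3 : ℤ), (1 : ℤ), (1 : ℤ)) +
        c • ((0 : ℤ), (1 : ℤ), (0 : ℤ)) + d • ((6 : ℤ), (-2 : ℤ), (2 : ℤ)) +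
        e • ((0 : ℤ), (0 : ℤ), (1 : ℤ))) ↔ (3 ≤ n ∧ 1 ≤ l)) ∧
    ((l = 0 ∨ n = 0 ∨ n = 1 ∨ n = 2) →
      ¬ ∃ a b c d e : ℕ,
        ((3 + n + 6 * m : ℤ), (-1 - 2 * m : ℤ), (1 + 2 * m + l : ℤ)) =
          a • ((1 : ℤ), (0 : ℤ), (0 : ℤ)) + b • ((3 : ℤ), (1 : ℤ), (1 : ℤ)) +
          c • ((0 : ℤ), (1 : ℤ), (0 : ℤ)) + d • ((6 : ℤ), (-2 : ℤ), (2 : ℤ)) +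
          e • ((0 : ℤ), (0 : ℤ), (1 : ℤ))) := by
  have key : (∃ a b c d e : ℕ,
      ((3 + n + 6 * m : ℤ), (-1 - 2 * m : ℤ), (1 + 2 * m + l : ℤ)) =
        a • ((1 : ℤ), (0 : ℤ), (0 : ℤ)) + b • ((3 : ℤ), (1 : ℤ), (1 : ℤ)) +
        c • ((0 : ℤ), (1 : ℤ), (0 : ℤ)) + d • ((6 : ℤ), (-2 : ℤ), (2 : ℤ)) +
        e • ((0 : ℤ), (0 : ℤ), (1 : ℤ))) ↔ (3 ≤ n ∧ 1 ≤ l) := by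
    constructor
    · rintro ⟨a, b, c, d, e, h⟩
      simp only [Prod.ext_iff, Prod.fst_add, Prod.snd_add, Prod.smul_mk, smul_eq_mul,
        nsmul_eq_mul] at h
      obtain ⟨h1, h2, h3⟩ := h
      omega
    · rintro ⟨hn, hl⟩
      refine ⟨n - 3, 0, 1, m + 1, l - 1, ?_⟩
      simp only [Prod.ext_iff, Prod.fst_add, Prod.snd_add, Prod.smul_mk, smul_eq_mul,
        nsmul_eq_mul]
      refine ⟨?_, ?_, ?_⟩ <;> push_cast <;> omega
  exact ⟨key, fun h hex => by have := key.mp hex; omega⟩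
end

section
/- For all natural numbers n, m, ℓ, the vector (1 + m + ℓ, −2n + ℓ, −2 − m − 3ℓ, −1 + n − 2m − ℓ) ∈ ℤ⁴ is not a non-negative integer combination of the seven vectors (1,0,0,0), (0,1,0,0), (0,0,1,0), (0,0,0,1), (1,1,−3,−1), (0,−2,0,1), (1,0,−1,−2). -/
/-- for all natural numbers `n, m, ℓ`, the class
`(1 + m + ℓ, −2n + ℓ, −2 − m − 3ℓ, −1 + n − 2m − ℓ) ∈ ℤ⁴` is not a non-negative integer
combination of the prime toric divisor classes of `V_{4,94}`:
`(1,0,0,0), (0,1,0,0), (0,0,1,0), (0,0,0,1), (1,1,−3,−1), (0,−2,0,1), (1,0,−1,−2)`. -/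
theorem interior_holes_V494
    (n m ℓ : ℕ) :
    ¬ ∃ a₁ a₂ a₃ a₄ a₅ a₆ a₇ : ℕ,
      ((1 + m + ℓ : ℤ), (-2 * n + ℓ : ℤ), (-2 - m - 3 * ℓ : ℤ),
        (-1 + n - 2 * m - ℓ : ℤ)) =
        a₁ • ((1 : ℤ), (0 : ℤ), (0 : ℤ), (0 : ℤ)) +
        a₂ • ((0 : ℤ), (1 : ℤ), (0 : ℤ), (0 : ℤ)) +
        a₃ • ((0 : ℤ), (0 : ℤ), (1 : ℤ), (0 : ℤ)) +
        a₄ • ((0 : ℤ), (0 : ℤ), (0 : ℤ), (1 : ℤ)) +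
        a₅ • ((1 : ℤ), (1 : ℤ), (-3 : ℤ), (-1 : ℤ)) +
        a₆ • ((0 : ℤ), (-2 : ℤ), (0 : ℤ), (1 : ℤ)) +
        a₇ • ((1 : ℤ), (0 : ℤ), (-1 : ℤ), (-2 : ℤ)) := by
  rintro ⟨a₁,a₂,a₃,a₄,a₅,a₆,a₇,h⟩
  simp only [Prod.ext_iff, Prod.smul_def, Prod.fst_add, Prod.snd_add, smul_eq_mul,
    Prod.fst_mul, Prod.snd_mul, nsmul_eq_mul] at h
  obtain ⟨h1,h2,h3,h4⟩ := h
  omega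
end

section
/- Consider the vector D = (1, 0, −2, −1) ∈ ℤ⁴ and the seven vectors w₁ = (1,0,0,0), w₂ = (0,1,0,0), w₃ = (0,0,1,0), w₄ = (0,0,0,1), w₅ = (1,1,−3,−1), w₆ = (0,−2,0,1), w₇ = (1,0,−1,−2). Then: (i) D is a non-negative rational combination of the wᵢ, namely D = ½·w₂ + ½·w₅ + ½·w₆ + ½·w₇; (ii) the double 2D = (2, 0, −4, −2) is a non-negative integer combination of the wᵢ, namely 2D = w₂ + w₅ + w₆ + w₇; but (iii) D itself is not a non-negative integer combination of the wᵢ. -/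
/-- the class `D = (1,0,−2,−1)` of `V_{4,94}` is (i) a non-negative
rational combination of the prime toric divisor classes, namely
`D = ½·w₂ + ½·w₅ + ½·w₆ + ½·w₇`; (ii) its double `2D = (2,0,−4,−2)` is a non-negative
integer combination, namely `2D = w₂ + w₅ + w₆ + w₇`; but (iii) `D` itself is not a
non-negative integer combination of the `wᵢ`: it is a hole. -/
theorem hole_V494 :
    -- (i) rational combination with coefficients 1/2
    ((1 : ℚ), (0 : ℚ), (-2 : ℚ), (-1 : ℚ)) =
      (1 / 2 : ℚ) • ((0 : ℚ), (1 : ℚ), (0 : ℚ), (0 : ℚ)) +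
      (1 / 2 : ℚ) • ((1 : ℚ), (1 : ℚ), (-3 : ℚ), (-1 : ℚ)) +
      (1 / 2 : ℚ) • ((0 : ℚ), (-2 : ℚ), (0 : ℚ), (1 : ℚ)) +
      (1 / 2 : ℚ) • ((1 : ℚ), (0 : ℚ), (-1 : ℚ), (-2 : ℚ)) ∧
    -- (ii) the double is an integer combination with coefficients 1
    ((2 : ℤ), (0 : ℤ), (-4 : ℤ), (-2 : ℤ)) =
      ((0 : ℤ), (1 : ℤ), (0 : ℤ), (0 : ℤ)) +
      ((1 : ℤ), (1 : ℤ), (-3 : ℤ), (-1 : ℤ)) +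
      ((0 : ℤ), (-2 : ℤ), (0 : ℤ), (1 : ℤ)) +
      ((1 : ℤ), (0 : ℤ), (-1 : ℤ), (-2 : ℤ)) ∧
    -- (iii) D itself is not a non-negative integer combination of w₁, …, w₇
    ¬ ∃ a₁ a₂ a₃ a₄ a₅ a₆ a₇ : ℕ,
      ((1 : ℤ), (0 : ℤ), (-2 : ℤ), (-1 : ℤ)) =
        a₁ • ((1 : ℤ), (0 : ℤ), (0 : ℤ), (0 : ℤ)) +
        a₂ • ((0 : ℤ), (1 : ℤ), (0 : ℤ), (0 : ℤ)) +
        a₃ • ((0 : ℤ), (0 : ℤ), (1 : ℤ), (0 : ℤ)) +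
        a₄ • ((0 : ℤ), (0 : ℤ), (0 : ℤ), (1 : ℤ)) +
        a₅ • ((1 : ℤ), (1 : ℤ), (-3 : ℤ), (-1 : ℤ)) +
        a₆ • ((0 : ℤ), (-2 : ℤ), (0 : ℤ), (1 : ℤ)) +
        a₇ • ((1 : ℤ), (0 : ℤ), (-1 : ℤ), (-2 : ℤ)) := by
  refine ⟨by norm_num [Prod.ext_iff], by norm_num [Prod.ext_iff], ?_⟩
  rintro ⟨a₁, a₂, a₃, a₄, a₅, a₆, a₇, h⟩
  simp only [Prod.ext_iff, Prod.smul_mk, Prod.mk_add_mk, nsmul_eq_mul] at h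
  omega
end
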